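/- Let R be a commutative ring, π ∈ R a nonzerodivisor, n ≥ 1, and suppose p/π^{n(p−1)} ∈ R (i.e. π^{n(p−1)} divides p in R), where p is a prime. Then for any flat commutative R-algebra A and any x ∈ A with 1 + π^n x invertible, the element φ_n(x) := ((1 + π^n x)^p − 1)/π^{pn} lies in A, 1 + π^{pn} φ_n(x) is invertible, and φ_n is a group homomorphism from (G_n(A), *_n) to (G_{pn}(A), *_{pn}), where x *_m y := x + y + π^m x y. -/

import Mathlib

/-- Auxiliary divisibility: `c^{pn} ∣ (1 + c^n x)^p - 1` when `c^{n(p-1)} ∣ p`. -/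
theorem statement5_aux_dvd (A : Type*) [CommRing A] (c : A) (p n : ℕ) (hp : p.Prime)
    (hdvd : c ^ (n * (p - 1)) ∣ (p : A)) (x : A) :
    c ^ (p * n) ∣ (1 + c ^ n * x) ^ p - 1 := by
  rw [add_comm, add_pow, Finset.sum_range_succ']
  simp only [pow_zero, one_pow, one_mul, Nat.choose_zero_right, Nat.cast_one, mul_one,
    add_sub_cancel_right]
  apply Finset.dvd_sum
  intro k hk
  rw [Finset.mem_range] at hk
  rcases eq_or_lt_of_le (Nat.succ_le_of_lt hk) with h | h
  · have heq : c ^ (p * n) = (c ^ n) ^ (k + 1) := by rw [← pow_mul, ← h, mul_comm]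
    rw [heq, mul_pow]
    exact (dvd_mul_right _ _).mul_right _
  · obtain ⟨m, hm⟩ := hp.dvd_choose_self (Nat.succ_ne_zero k) h
    have h2 : c ^ (p * n) ∣ (c ^ n) ^ (k + 1) * (p : A) := by
      calc c ^ (p * n) ∣ c ^ (n * (k + 1) + n * (p - 1)) := by
            apply pow_dvd_pow
            obtain ⟨q, hq⟩ : ∃ q, p = q + 2 := ⟨p - 2, by have := hp.two_le; omega⟩
            subst hq
            have h4 : q + 2 - 1 = q + 1 := rfl
            rw [h4]; ring_nf; omega
      _ = (c ^ n) ^ (k + 1) * c ^ (n * (p - 1)) := by rw [pow_add, pow_mul]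
      _ ∣ _ := mul_dvd_mul_left _ hdvd
    have heq : (c ^ n * x) ^ (k + 1) * ↑(p.choose (k + 1))
        = (c ^ n) ^ (k + 1) * (p : A) * (x ^ (k + 1) * m) := by
      rw [hm]; push_cast; ring
    rw [heq]
    exact h2.mul_right _

/-- Auxiliary: the image of a nonzerodivisor under the structure map of a flat algebra
is a nonzerodivisor. -/
theorem statement5_aux_nzd (R : Type*) [CommRing R] (π : R) (hπ : π ∈ nonZeroDivisors R)
    (A : Type*) [CommRing A] [Algebra R A] [Module.Flat R A] :
    algebraMap R A π ∈ nonZeroDivisors A := by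
  have hregR : IsSMulRegular R π := by
    intro a b h
    simp only [smul_eq_mul] at h
    have := mem_nonZeroDivisors_iff_right.mp hπ (a - b) (by rw [sub_mul, mul_comm a π, mul_comm b π, h, sub_self])
    exact sub_eq_zero.mp this
  have hT : IsSMulRegular (TensorProduct R A R) π := hregR.lTensor A
  have hA : IsSMulRegular A π :=
    hT.of_injective (TensorProduct.rid R A).symm.toLinearMap
      (TensorProduct.rid R A).symm.injective
  have hc : IsSMulRegular A (algebraMap R A π) :=
    (isSMulRegular_algebraMap_iff (A := A) (M := A) (r := π)).mpr hA
  rw [mem_nonZeroDivisors_iff_right]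
  intro a ha
  exact hc (by simpa [smul_eq_mul, mul_comm] using ha)

/-- **The isogeny `φₙ : 𝒢ₙ → 𝒢ₚₙ` (1.3.1).**  Let `R` be a commutative ring, `π ∈ R` a
nonzerodivisor, `n ≥ 1`, `p` a prime with `π^{n(p-1)} ∣ p` in `R`, and `A` a flat
commutative `R`-algebra.  For `x ∈ G_n(A)` (i.e. `1 + π^n x` invertible) the element
`φₙ(x) = ((1 + π^n x)^p - 1)/π^{pn}` exists (uniquely) in `A`; moreover
`1 + π^{pn} φₙ(x)` is invertible, and `φₙ` is a group homomorphism
`(G_n(A), *ₙ) → (G_{pn}(A), *ₚₙ)` where `x *ₘ y := x + y + π^m x y`. -/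
theorem statement5 (R : Type*) [CommRing R] (p : ℕ) (hp : p.Prime)
    (π : R) (hπ : π ∈ nonZeroDivisors R) (n : ℕ) (hn : 1 ≤ n)
    (hdvd : π ^ (n * (p - 1)) ∣ (p : R))
    (A : Type*) [CommRing A] [Algebra R A] [Module.Flat R A] :
    letI c : A := algebraMap R A π
    -- `φₙ(x)` is a well-defined element of `A`
    (∀ x : A, IsUnit (1 + c ^ n * x) →
        ∃! y : A, c ^ (p * n) * y = (1 + c ^ n * x) ^ p - 1) ∧
    -- `φₙ(x)` lands in `G_{pn}(A)`
    (∀ x y : A, IsUnit (1 + c ^ n * x) →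
        c ^ (p * n) * y = (1 + c ^ n * x) ^ p - 1 → IsUnit (1 + c ^ (p * n) * y)) ∧
    -- `φₙ` is a group homomorphism
    (∀ x₁ x₂ y₁ y₂ y₃ : A, IsUnit (1 + c ^ n * x₁) → IsUnit (1 + c ^ n * x₂) →
        c ^ (p * n) * y₁ = (1 + c ^ n * x₁) ^ p - 1 →
        c ^ (p * n) * y₂ = (1 + c ^ n * x₂) ^ p - 1 →
        c ^ (p * n) * y₃ = (1 + c ^ n * (x₁ + x₂ + c ^ n * x₁ * x₂)) ^ p - 1 →
        y₃ = y₁ + y₂ + c ^ (p * n) * y₁ * y₂) := by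
  set c : A := algebraMap R A π with hcdef
  have hc : c ∈ nonZeroDivisors A := statement5_aux_nzd R π hπ A
  have hcpn : c ^ (p * n) ∈ nonZeroDivisors A := pow_mem hc _
  have hdvdA : c ^ (n * (p - 1)) ∣ (p : A) := by
    have := map_dvd (algebraMap R A) hdvd
    rwa [map_pow, map_natCast] at this
  have hcancel : ∀ a b : A, c ^ (p * n) * a = c ^ (p * n) * b → a = b := by
    intro a b h
    have h0 : (a - b) * c ^ (p * n) = 0 := by
      rw [sub_mul, mul_comm a, mul_comm b, h, sub_self]
    exact sub_eq_zero.mp (mem_nonZeroDivisors_iff_right.mp hcpn _ h0)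
  refine ⟨?_, ?_, ?_⟩
  · intro x hx
    obtain ⟨y, hy⟩ := statement5_aux_dvd A c p n hp hdvdA x
    refine ⟨y, hy.symm, fun z hz => hcancel z y (by rw [hz, hy])⟩
  · intro x y hx hy
    have : 1 + c ^ (p * n) * y = (1 + c ^ n * x) ^ p := by rw [hy]; ring
    rw [this]
    exact hx.pow p
  · intro x₁ x₂ y₁ y₂ y₃ h₁ h₂ e₁ e₂ e₃
    apply hcancel
    have key : (1 : A) + c ^ n * (x₁ + x₂ + c ^ n * x₁ * x₂)
        = (1 + c ^ n * x₁) * (1 + c ^ n * x₂) := by ring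
    rw [e₃, key, mul_pow]
    have f₁ : (1 + c ^ n * x₁) ^ p = 1 + c ^ (p * n) * y₁ := by rw [e₁]; ring
    have f₂ : (1 + c ^ n * x₂) ^ p = 1 + c ^ (p * n) * y₂ := by rw [e₂]; ring
    rw [f₁, f₂]
    ring
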